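/- For every mu in a_Z*, the operator on V given by v |-> sum over w in W0 of X^{w mu} . v (via the level -(l+h) action) maps the submodule I into I. Consequently the level -(l+h) action of K[X] on V induces a well-defined K-linear action of the ring of symmetric functions K[X]^{W0} on the abstract Fock space F_l = V/I, given on classes by (sum over w in W0 of X^{w mu}) . |gamma> = sum over w in W0 of |gamma - l*w0(w mu)> for all mu, gamma in a_Z*. (Proposition 1.1) -/

import Mathlib

open Finsupp LaurentPolynomial

noncomputable section

/-- The ring `K = ℤ[t^{1/2}, t^{-1/2}]`: Laurent polynomials over `ℤ` in the
variable `T = t^{1/2}`. -/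
abbrev K : Type := LaurentPolynomial ℤ

/-- The element `t^{1/2}` of `K`. -/
def tHalf : K := T 1

/-- The bar involution of `K`, determined by `t^{1/2} ↦ t^{-1/2}`. -/
def conjK : K →+* K := (LaurentPolynomial.invert (R := ℤ)).toRingHom

/-- `V`: the free `K`-module with basis `{|λ⟩ : λ ∈ a_ℤ^*}` indexed by the weight
lattice `Λ`. -/
abbrev V (Λ : Type) : Type := Λ →₀ K

/-- The basis element `|λ⟩` of `V`. -/
def ket {Λ : Type} (lam : Λ) : V Λ := Finsupp.single lam 1

/-- The multiplicative group structure on `AddAut Λ` of the older Mathlib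
(`g * h = h.trans g`); current Mathlib makes `AddAut Λ` an additive group. -/
instance instGroupAddAutOld {Λ : Type} [AddCommGroup Λ] : Group (AddAut Λ) where
  mul g h := AddEquiv.trans h g
  one := AddEquiv.refl _
  inv := AddEquiv.symm
  mul_assoc _ _ _ := rfl
  one_mul _ := rfl
  mul_one _ := rfl
  inv_mul_cancel := AddEquiv.self_trans_symm

/-- The data of (the weight lattice of) a reduced finite crystallographic root
system: the weight lattice `Λ = a_ℤ^*`, the (finite) Weyl group `W = W₀` acting
on `Λ` through `σ`, the simple reflections `s i`, the simple roots `α i`, the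
pairings `pair i = ⟨·, α_i^∨⟩` with the simple coroots, the finite set
`posRoots` of pairings `⟨·, α^∨⟩` with the coroots `α^∨` of the positive roots
`α ∈ R⁺`, the half-sum `ρ` of the positive roots (assumed to lie in `Λ`), the
longest element `w0` (of length `posRoots.card`), and the sign character `det`. -/
structure RootData (Λ W : Type) [AddCommGroup Λ] [Group W] [Fintype W] where
  n : ℕ
  σ : W →* AddAut Λ
  s : Fin n → W
  α : Fin n → Λ
  pair : Fin n → Λ →+ ℤ
  posRoots : Finset (Λ →+ ℤ)
  ρ : Λ
  w0 : W
  det : W →* ℤˣ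
  /-- `s i` acts on `Λ` as the reflection in the simple root `α i`. -/
  reflect : ∀ (i : Fin n) (lam : Λ), σ (s i) lam = lam - pair i lam • α i
  /-- crystallographic normalization `⟨α_i, α_i^∨⟩ = 2`. -/
  pair_alpha_self : ∀ i : Fin n, pair i (α i) = 2
  /-- the simple reflections are involutions. -/
  s_sq : ∀ i : Fin n, s i * s i = 1
  /-- `W₀` is generated by the simple reflections. -/
  gen_s : Subgroup.closure (Set.range s) = ⊤
  /-- `⟨ρ, α_i^∨⟩ = 1` for every simple coroot. -/
  pair_rho : ∀ i : Fin n, pair i ρ = 1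
  /-- each simple coroot is the coroot of a positive root. -/
  pair_mem : ∀ i : Fin n, pair i ∈ posRoots
  /-- the Weyl group permutes the (co)roots up to sign. -/
  roots_perm : ∀ (w : W), ∀ f ∈ posRoots,
    (∃ g ∈ posRoots, ∀ lam, f (σ w lam) = g lam) ∨
    (∃ g ∈ posRoots, ∀ lam, f (σ w lam) = - g lam)
  /-- `w0` sends every positive root to a negative root (so `w0` is the longest
  element, of length `posRoots.card`). -/
  w0_neg : ∀ f ∈ posRoots, ∃ g ∈ posRoots, ∀ lam, f (σ w0 lam) = - g lam
  /-- `det` is the sign character. -/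
  det_s : ∀ i : Fin n, det (s i) = -1

namespace RootData

variable {Λ W : Type} [AddCommGroup Λ] [Group W] [Fintype W]

/-- The dot action `w ∘ λ = w(λ + ρ) - ρ`. -/
def dot (D : RootData Λ W) (w : W) (lam : Λ) : Λ := D.σ w (lam + D.ρ) - D.ρ

/-- `λ^{(1)} = λ - j • α_i`, where `⟨λ + ρ, α_i^∨⟩ = k l + j` with `j ∈ {0, …, l-1}`
(relative to the index `i`). -/
def lamOne (D : RootData Λ W) (l : ℕ) (i : Fin D.n) (lam : Λ) : Λ :=
  lam - (D.pair i (lam + D.ρ) % (l : ℤ)) • D.α i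

/-- A weight `λ` is dominant when `⟨λ + ρ, α_i^∨⟩ > 0` for all `i`. -/
def dominant (D : RootData Λ W) (lam : Λ) : Prop :=
  ∀ i : Fin D.n, 0 < D.pair i (lam + D.ρ)

/-- `λ₀ ∈ Π_l`: an `l`-restricted dominant weight. -/
def restricted (D : RootData Λ W) (l : ℕ) (lam : Λ) : Prop :=
  D.dominant lam ∧ ∀ i : Fin D.n, D.pair i lam ≤ (l : ℤ) - 1

/-- The `K`-submodule `I` of `V` spanned by the straightening elements
(a), (b), (c). -/
def Idl (D : RootData Λ W) (l : ℕ) : Submodule K (V Λ) :=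
  Submodule.span K
    ({x | ∃ (i : Fin D.n) (lam : Λ),
        (∃ k : ℤ, 0 ≤ k ∧ D.pair i (lam + D.ρ) = k * l) ∧
        x = ket (D.dot (D.s i) lam) + ket lam} ∪
     {x | ∃ (i : Fin D.n) (lam : Λ),
        0 < D.pair i (lam + D.ρ) ∧ D.pair i (lam + D.ρ) < (l : ℤ) ∧
        x = ket (D.dot (D.s i) lam) + tHalf • ket lam} ∪
     {x | ∃ (i : Fin D.n) (lam : Λ),
        (l : ℤ) < D.pair i (lam + D.ρ) ∧ ¬ ((l : ℤ) ∣ D.pair i (lam + D.ρ)) ∧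
        x = ket (D.dot (D.s i) lam) + tHalf • ket (D.dot (D.s i) (D.lamOne l i lam)) +
            ket (D.lamOne l i lam) + tHalf • ket lam})

/-- The operator `X^μ · : V → V` of the level `-(l+h)` action:
`X^μ · |γ⟩ = |γ - l w0(μ)⟩`. -/
def opX (D : RootData Λ W) (l : ℕ) (mu : Λ) : V Λ →ₗ[K] V Λ :=
  Finsupp.lmapDomain K K (fun gam => gam - l • D.σ D.w0 mu)

/-- The level `-(l+h)` action of an element `g` of the group algebra `K[X]`
(with `K`-coefficients) on `V`. -/
def actKX (D : RootData Λ W) (l : ℕ) (g : Λ →₀ K) (v : V Λ) : V Λ :=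
  g.sum fun mu c => c • (D.opX l mu v)

/-- The level `-(l+h)` action of an element `g` of `ℤ[X]` on `V`. -/
def actZX (D : RootData Λ W) (l : ℕ) (g : Λ →₀ ℤ) (v : V Λ) : V Λ :=
  g.sum fun mu c => c • (D.opX l mu v)

/-- `N_λ = #{α ∈ R⁺ : ⟨λ + ρ, α^∨⟩ ∈ lℤ}`. -/
def Ncount (D : RootData Λ W) (l : ℕ) (lam : Λ) : ℕ :=
  (D.posRoots.filter (fun f => (l : ℤ) ∣ f (lam + D.ρ))).card

/-- The coefficient `(-1)^{l(w0)} (t^{-1/2})^{l(w0) - N_λ}` appearing in the bar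
involution, where `l(w0) = Card R⁺`. -/
def barCoef (D : RootData Λ W) (l : ℕ) (lam : Λ) : K :=
  ((-1 : K) ^ D.posRoots.card) * T ((D.Ncount l lam : ℤ) - (D.posRoots.card : ℤ))

/-- The bar involution of `V`:
`bar(c|λ⟩) = c̄ (-1)^{l(w0)} (t^{-1/2})^{l(w0)-N_λ} |w0 ∘ λ⟩`. -/
def barV (D : RootData Λ W) (l : ℕ) (v : V Λ) : V Λ :=
  v.sum fun lam c => (conjK c * D.barCoef l lam) • ket (D.dot D.w0 lam)

/-- `V⁺`: the `ℤ[t^{1/2}]`-span of the `|μ⟩` inside `V`, i.e. the elements all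
of whose coefficients are polynomials in `t^{1/2}`. -/
def inVplus {Λ : Type} (b : V Λ) : Prop :=
  ∀ (mu : Λ) (m : ℤ), m < 0 → (b mu).coeff m = 0

/-- Membership in `I + t^{1/2} V⁺`. -/
def inIplus (D : RootData Λ W) (l : ℕ) (x : V Λ) : Prop :=
  ∃ a ∈ D.Idl l, ∃ b : V Λ, inVplus b ∧ x = a + tHalf • b

/-- The Weyl numerator `∑_{w ∈ W₀} det(w) X^{w ν}` in `K[X]`. -/
def weylNumer (D : RootData Λ W) (nu : Λ) : AddMonoidAlgebra K Λ :=
  ∑ w : W, ((D.det w : ℤˣ) : ℤ) • AddMonoidAlgebra.single (D.σ w nu) (1 : K)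

/-- `g` is the Weyl character `s_ν ∈ ℤ[X]^{W₀} ⊆ K[X]`: it has integer
coefficients, is `W₀`-invariant, and satisfies the Weyl character formula
`(∑_w det(w) X^{wρ}) · s_ν = ∑_w det(w) X^{w(ν+ρ)}`. -/
def IsWeylChar (D : RootData Λ W) (nu : Λ) (g : AddMonoidAlgebra K Λ) : Prop :=
  (∀ mu : Λ, ∃ z : ℤ, g.coeff mu = (z : K)) ∧
  (∀ (w : W) (mu : Λ), g.coeff (D.σ w mu) = g.coeff mu) ∧
  D.weylNumer D.ρ * g = D.weylNumer (nu + D.ρ)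

end RootData

end
section Aux
variable {Λ W : Type} [AddCommGroup Λ] [Group W] [Fintype W] (D : RootData Λ W) (l : ℕ)

lemma sig_sig (i : Fin D.n) (x : Λ) : D.σ (D.s i) (D.σ (D.s i) x) = x := by
  have h : D.σ (D.s i * D.s i) x = x := by rw [D.s_sq, map_one]; rfl
  rw [map_mul] at h; exact h

lemma dot_dot (i : Fin D.n) (lam : Λ) : D.dot (D.s i) (D.dot (D.s i) lam) = lam := by
  unfold RootData.dot
  rw [sub_add_cancel, sig_sig, add_sub_cancel_right]

lemma pair_sig (i : Fin D.n) (x : Λ) : D.pair i (D.σ (D.s i) x) = - D.pair i x := by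
  rw [D.reflect, map_sub, map_zsmul, D.pair_alpha_self, smul_eq_mul]; ring

lemma pair_dot (i : Fin D.n) (lam : Λ) :
    D.pair i (D.dot (D.s i) lam + D.ρ) = - D.pair i (lam + D.ρ) := by
  unfold RootData.dot
  rw [sub_add_cancel, pair_sig]

lemma dot_eq (i : Fin D.n) (lam : Λ) :
    D.dot (D.s i) lam = lam - D.pair i (lam + D.ρ) • D.α i := by
  unfold RootData.dot
  rw [D.reflect]; abel

lemma dot_sub (i : Fin D.n) (lam β : Λ) (c : ℤ) :
    D.dot (D.s i) (lam - c • D.σ (D.s i) β) = D.dot (D.s i) lam - c • β := by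
  unfold RootData.dot
  have h1 : lam - c • D.σ (D.s i) β + D.ρ = (lam + D.ρ) + (-c) • (D.σ (D.s i) β) := by module
  rw [h1, map_add, map_zsmul, sig_sig]
  module

lemma pair_sub (i : Fin D.n) (x β : Λ) (c : ℤ) :
    D.pair i (x - c • β) = D.pair i x - c * D.pair i β := by
  rw [map_sub, map_zsmul, smul_eq_mul]

lemma pair_shift (i : Fin D.n) (lam β : Λ) (c : ℤ) :
    D.pair i (lam - c • β + D.ρ) = D.pair i (lam + D.ρ) - c * D.pair i β := by
  rw [show lam - c • β + D.ρ = (lam + D.ρ) - c • β by abel, pair_sub]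

end Aux
section Aux2
variable {Λ W : Type} [AddCommGroup Λ] [Group W] [Fintype W] (D : RootData Λ W) (l : ℕ)

lemma genA_mem (i : Fin D.n) (mu : Λ) (h : (l:ℤ) ∣ D.pair i (mu + D.ρ)) :
    ket (D.dot (D.s i) mu) + ket mu ∈ D.Idl l := by
  obtain ⟨k, hk⟩ := h
  rcases le_or_gt 0 k with hk0 | hk0
  · apply Submodule.subset_span
    left; left
    exact ⟨i, mu, ⟨k, hk0, by rw [hk]; ring⟩, rfl⟩
  · have h2 : D.pair i (D.dot (D.s i) mu + D.ρ) = (-k) * l := by rw [pair_dot, hk]; ring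
    have hmem : ket (D.dot (D.s i) (D.dot (D.s i) mu)) + ket (D.dot (D.s i) mu) ∈ D.Idl l := by
      apply Submodule.subset_span
      left; left
      exact ⟨i, D.dot (D.s i) mu, ⟨-k, by omega, h2⟩, rfl⟩
    rw [dot_dot] at hmem
    rwa [add_comm]

lemma genB_mem (i : Fin D.n) (mu : Λ) (h1 : 0 < D.pair i (mu + D.ρ))
    (h2 : D.pair i (mu + D.ρ) < (l:ℤ)) :
    ket (D.dot (D.s i) mu) + tHalf • ket mu ∈ D.Idl l := by
  apply Submodule.subset_span
  left; right
  exact ⟨i, mu, h1, h2, rfl⟩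

lemma genC_mem (i : Fin D.n) (mu : Λ) (h1 : (l:ℤ) < D.pair i (mu + D.ρ))
    (h2 : ¬ ((l:ℤ) ∣ D.pair i (mu + D.ρ))) :
    ket (D.dot (D.s i) mu) + tHalf • ket (D.dot (D.s i) (D.lamOne l i mu)) +
      ket (D.lamOne l i mu) + tHalf • ket mu ∈ D.Idl l := by
  apply Submodule.subset_span
  right
  exact ⟨i, mu, h1, h2, rfl⟩

lemma cand_mem (hl : 0 < l) (i : Fin D.n) (mu : Λ)
    (h : ¬ ((l:ℤ) ∣ D.pair i (mu + D.ρ))) :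
    ket (D.dot (D.s i) mu) + tHalf • ket (D.dot (D.s i) (D.lamOne l i mu)) +
      ket (D.lamOne l i mu) + tHalf • ket mu ∈ D.Idl l := by
  have hl' : (0:ℤ) < l := by exact_mod_cast hl
  set M := D.pair i (mu + D.ρ) with hM
  set j := M % (l:ℤ) with hj
  have hj0 : 0 < j := by
    rcases (Int.emod_nonneg M hl'.ne').lt_or_eq with h' | h'
    · exact h'
    · exact absurd (Int.dvd_of_emod_eq_zero h'.symm) h
  have hjl : j < l := Int.emod_lt_of_pos M hl'
  obtain ⟨q, hq⟩ : (l:ℤ) ∣ (j - M) := ⟨-(M / l), by rw [hj, Int.emod_def]; ring⟩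
  have hlam1 : D.lamOne l i mu = mu - j • D.α i := by rw [RootData.lamOne, ← hM, ← hj]
  have hpl1 : D.pair i (D.lamOne l i mu + D.ρ) = M - 2*j := by
    rw [hlam1, pair_shift, ← hM, D.pair_alpha_self]; ring
  rcases lt_trichotomy M 0 with hMneg | hM0 | hMpos
  · -- M < 0 : use a type (c) generator at ν = s_i ∘ (λ^{(1)})
    set ν := D.dot (D.s i) (D.lamOne l i mu) with hν
    have hpν : D.pair i (ν + D.ρ) = 2*j - M := by rw [hν, pair_dot, hpl1]; ring
    have hmod : (2*j - M) % (l:ℤ) = j := by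
      rw [show 2*j - M = j + (l:ℤ)*q by linarith [hq], Int.add_mul_emod_self_left,
        Int.emod_eq_of_lt hj0.le hjl]
    have hnd : ¬ ((l:ℤ) ∣ (2*j - M)) := by
      intro hd
      rw [Int.dvd_iff_emod_eq_zero] at hd
      exact absurd (hmod.symm.trans hd) hj0.ne'
    have hq0 : 0 < q := by
      by_contra hq0
      push_neg at hq0
      have h1 : (l:ℤ)*q ≤ 0 := mul_nonpos_of_nonneg_of_nonpos hl'.le hq0
      linarith [hq]
    have hgt : (l:ℤ) < 2*j - M := by nlinarith [hq, hq0, hj0, hl']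
    have hν1 : D.lamOne l i ν = D.dot (D.s i) mu := by
      rw [RootData.lamOne, hpν, hmod, hν, dot_eq D i (D.lamOne l i mu), hpl1, hlam1,
        dot_eq D i mu, ← hM]
      module
    have hgen := genC_mem D l i ν (by rw [hpν]; exact hgt) (by rw [hpν]; exact hnd)
    rw [hν1, hν, dot_dot, dot_dot] at hgen
    have e : ket (D.dot (D.s i) mu) +
        tHalf • ket (D.dot (D.s i) (D.lamOne l i mu)) +
        ket (D.lamOne l i mu) + tHalf • ket mu =
        ket (D.lamOne l i mu) + tHalf • ket mu + ket (D.dot (D.s i) mu) +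
        tHalf • ket (D.dot (D.s i) (D.lamOne l i mu)) := by module
    rw [e]; exact hgen
  · exact absurd (show (l:ℤ) ∣ M by rw [hM0]; exact dvd_zero _) h
  · rcases lt_or_ge M (l:ℤ) with hMl | hMl'
    · -- 0 < M < l
      have hMj : j = M := by rw [hj, Int.emod_eq_of_lt hMpos.le hMl]
      have h1 : D.dot (D.s i) mu = D.lamOne l i mu := by
        rw [dot_eq, hlam1, ← hM, hMj]
      have h2 : D.dot (D.s i) (D.lamOne l i mu) = mu := by rw [← h1, dot_dot]
      have hgenb : ket (D.dot (D.s i) mu) + tHalf • ket mu ∈ D.Idl l :=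
        genB_mem D l i mu (by rw [← hM]; exact hMpos) (by rw [← hM]; exact hMl)
      have e : ket (D.dot (D.s i) mu) +
          tHalf • ket (D.dot (D.s i) (D.lamOne l i mu)) +
          ket (D.lamOne l i mu) + tHalf • ket mu =
          (ket (D.dot (D.s i) mu) + tHalf • ket mu) +
          (ket (D.dot (D.s i) mu) + tHalf • ket mu) := by
        rw [h2, ← h1]; module
      rw [e]; exact Submodule.add_mem _ hgenb hgenb
    · have hMgt : (l:ℤ) < M := by
        rcases hMl'.lt_or_eq with h' | h'
        · exact h'
        · exact absurd (h' ▸ dvd_refl (l:ℤ)) h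
      exact genC_mem D l i mu (by rw [← hM]; exact hMgt) (by rw [← hM]; exact h)

end Aux2
section Aux3
variable {Λ W : Type} [AddCommGroup Λ] [Group W] [Fintype W] (D : RootData Λ W) (l : ℕ)

lemma dot_sub' (i : Fin D.n) (lam β : Λ) (c : ℤ) :
    D.dot (D.s i) (lam - c • β) = D.dot (D.s i) lam - c • D.σ (D.s i) β := by
  have := dot_sub D i lam (D.σ (D.s i) β) c
  rwa [sig_sig] at this

lemma shiftA (hl : 0 < l) (i : Fin D.n) (lam β : Λ)
    (hk : ∃ k : ℤ, 0 ≤ k ∧ D.pair i (lam + D.ρ) = k * l) :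
    (ket (D.dot (D.s i) lam - (l:ℤ) • β) + ket (lam - (l:ℤ) • β)) +
    (ket (D.dot (D.s i) lam - (l:ℤ) • D.σ (D.s i) β) + ket (lam - (l:ℤ) • D.σ (D.s i) β))
      ∈ D.Idl l := by
  obtain ⟨k, hk0, hkM⟩ := hk
  rw [← dot_sub D i lam β (l:ℤ), ← dot_sub' D i lam β (l:ℤ)]
  have m1 : ket (D.dot (D.s i) (lam - (l:ℤ) • β)) + ket (lam - (l:ℤ) • β) ∈ D.Idl l := by
    apply genA_mem
    rw [pair_shift, hkM]
    exact ⟨k - D.pair i β, by ring⟩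
  have m2 : ket (D.dot (D.s i) (lam - (l:ℤ) • D.σ (D.s i) β)) +
      ket (lam - (l:ℤ) • D.σ (D.s i) β) ∈ D.Idl l := by
    apply genA_mem
    rw [pair_shift, hkM, pair_sig]
    exact ⟨k + D.pair i β, by ring⟩
  have e : (ket (D.dot (D.s i) (lam - (l:ℤ) • D.σ (D.s i) β)) + ket (lam - (l:ℤ) • β)) +
      (ket (D.dot (D.s i) (lam - (l:ℤ) • β)) + ket (lam - (l:ℤ) • D.σ (D.s i) β)) =
      (ket (D.dot (D.s i) (lam - (l:ℤ) • β)) + ket (lam - (l:ℤ) • β)) +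
      (ket (D.dot (D.s i) (lam - (l:ℤ) • D.σ (D.s i) β)) +
        ket (lam - (l:ℤ) • D.σ (D.s i) β)) := by abel
  rw [e]
  exact Submodule.add_mem _ m1 m2

lemma singleA (i : Fin D.n) (lam β : Λ)
    (hk : ∃ k : ℤ, 0 ≤ k ∧ D.pair i (lam + D.ρ) = k * l) (hd : D.pair i β = 0) :
    ket (D.dot (D.s i) lam - (l:ℤ) • β) + ket (lam - (l:ℤ) • β) ∈ D.Idl l := by
  obtain ⟨k, hk0, hkM⟩ := hk
  have hσ : D.σ (D.s i) β = β := by rw [D.reflect, hd]; simp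
  rw [show D.dot (D.s i) lam - (l:ℤ) • β = D.dot (D.s i) (lam - (l:ℤ) • β) by
    rw [dot_sub' D i lam β (l:ℤ), hσ]]
  apply genA_mem
  rw [pair_shift, hkM, hd]
  exact ⟨k, by ring⟩

end Aux3
section Aux4
variable {Λ W : Type} [AddCommGroup Λ] [Group W] [Fintype W] (D : RootData Λ W) (l : ℕ)

lemma shiftB (hl : 0 < l) (i : Fin D.n) (lam β : Λ)
    (hb1 : 0 < D.pair i (lam + D.ρ)) (hb2 : D.pair i (lam + D.ρ) < (l:ℤ)) :
    (ket (D.dot (D.s i) lam - (l:ℤ) • β) + tHalf • ket (lam - (l:ℤ) • β)) +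
    (ket (D.dot (D.s i) lam - (l:ℤ) • D.σ (D.s i) β) +
      tHalf • ket (lam - (l:ℤ) • D.σ (D.s i) β)) ∈ D.Idl l := by
  set M := D.pair i (lam + D.ρ) with hM
  set d := D.pair i β with hd
  set μ := lam - (l:ℤ) • β with hμ
  set μ' := lam - (l:ℤ) • (D.σ (D.s i) β) with hμ'
  have hpμ : D.pair i (μ + D.ρ) = M - l*d := by rw [hμ, pair_shift, ← hM, ← hd]
  have hpμ' : D.pair i (μ' + D.ρ) = M + l*d := by
    rw [hμ', pair_shift, pair_sig, ← hM, ← hd]; ring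
  have hmod : (M - (l:ℤ)*d) % l = M := by
    rw [show M - (l:ℤ)*d = M + (l:ℤ)*(-d) by ring, Int.add_mul_emod_self_left,
      Int.emod_eq_of_lt hb1.le hb2]
  have hnd : ¬ ((l:ℤ) ∣ D.pair i (μ + D.ρ)) := by
    rw [hpμ]
    intro hdd
    rw [Int.dvd_iff_emod_eq_zero, hmod] at hdd
    exact absurd hdd hb1.ne'
  have hσβ : D.σ (D.s i) β = β - d • D.α i := by rw [D.reflect, ← hd]
  have key1' : D.lamOne l i μ = μ - M • D.α i := by rw [RootData.lamOne, hpμ, hmod]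
  have key1 : D.dot (D.s i) μ' = μ - M • D.α i := by
    rw [dot_eq, hpμ', hμ', hμ, hσβ]; module
  have key3 : D.lamOne l i μ = D.dot (D.s i) μ' := by rw [key1', key1]
  have key2 : D.dot (D.s i) (D.lamOne l i μ) = μ' := by rw [key3, dot_dot]
  have hcand := cand_mem D l hl i μ hnd
  rw [key2, key3] at hcand
  rw [show D.dot (D.s i) lam - (l:ℤ) • β = D.dot (D.s i) μ' by rw [hμ', dot_sub],
      show D.dot (D.s i) lam - (l:ℤ) • (D.σ (D.s i) β) = D.dot (D.s i) μ by
        rw [hμ, dot_sub']]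
  have e : (ket (D.dot (D.s i) μ') + tHalf • ket μ) +
      (ket (D.dot (D.s i) μ) + tHalf • ket μ') =
      ket (D.dot (D.s i) μ) + tHalf • ket μ' + ket (D.dot (D.s i) μ') + tHalf • ket μ := by
    module
  rw [e]; exact hcand

lemma singleB (i : Fin D.n) (lam β : Λ)
    (hb1 : 0 < D.pair i (lam + D.ρ)) (hb2 : D.pair i (lam + D.ρ) < (l:ℤ))
    (hd0 : D.pair i β = 0) :
    ket (D.dot (D.s i) lam - (l:ℤ) • β) + tHalf • ket (lam - (l:ℤ) • β) ∈ D.Idl l := by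
  have hσ : D.σ (D.s i) β = β := by rw [D.reflect, hd0]; simp
  rw [show D.dot (D.s i) lam - (l:ℤ) • β = D.dot (D.s i) (lam - (l:ℤ) • β) by
    rw [dot_sub' D i lam β, hσ]]
  apply genB_mem
  · rw [pair_shift, hd0, mul_zero, sub_zero]; exact hb1
  · rw [pair_shift, hd0, mul_zero, sub_zero]; exact hb2

lemma shiftC (hl : 0 < l) (i : Fin D.n) (lam β : Λ)
    (hc1 : (l:ℤ) < D.pair i (lam + D.ρ)) (hc2 : ¬ ((l:ℤ) ∣ D.pair i (lam + D.ρ))) :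
    (ket (D.dot (D.s i) lam - (l:ℤ) • β) +
      tHalf • ket (D.dot (D.s i) (D.lamOne l i lam) - (l:ℤ) • β) +
      ket (D.lamOne l i lam - (l:ℤ) • β) + tHalf • ket (lam - (l:ℤ) • β)) +
    (ket (D.dot (D.s i) lam - (l:ℤ) • D.σ (D.s i) β) +
      tHalf • ket (D.dot (D.s i) (D.lamOne l i lam) - (l:ℤ) • D.σ (D.s i) β) +
      ket (D.lamOne l i lam - (l:ℤ) • D.σ (D.s i) β) +
      tHalf • ket (lam - (l:ℤ) • D.σ (D.s i) β)) ∈ D.Idl l := by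
  have hl' : (0:ℤ) < l := by exact_mod_cast hl
  set M := D.pair i (lam + D.ρ) with hM
  set d := D.pair i β with hd
  set j := M % (l:ℤ) with hj
  have hj0 : 0 < j := by
    rcases (Int.emod_nonneg M hl'.ne').lt_or_eq with h' | h'
    · exact h'
    · exact absurd (Int.dvd_of_emod_eq_zero h'.symm) hc2
  set μ := lam - (l:ℤ) • β with hμ
  set μ' := lam - (l:ℤ) • (D.σ (D.s i) β) with hμ'
  have hpμ : D.pair i (μ + D.ρ) = M - l*d := by rw [hμ, pair_shift, ← hM, ← hd]
  have hpμ' : D.pair i (μ' + D.ρ) = M + l*d := by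
    rw [hμ', pair_shift, pair_sig, ← hM, ← hd]; ring
  have hmodμ : (M - (l:ℤ)*d) % l = j := by
    rw [show M - (l:ℤ)*d = M + (l:ℤ)*(-d) by ring, Int.add_mul_emod_self_left]
  have hmodμ' : (M + (l:ℤ)*d) % l = j := by rw [Int.add_mul_emod_self_left]
  have hndμ : ¬ ((l:ℤ) ∣ D.pair i (μ + D.ρ)) := by
    rw [hpμ]
    intro hdd
    rw [Int.dvd_iff_emod_eq_zero, hmodμ] at hdd
    exact absurd hdd hj0.ne'
  have hndμ' : ¬ ((l:ℤ) ∣ D.pair i (μ' + D.ρ)) := by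
    rw [hpμ']
    intro hdd
    rw [Int.dvd_iff_emod_eq_zero, hmodμ'] at hdd
    exact absurd hdd hj0.ne'
  have hOne : ∀ x : Λ, D.lamOne l i x = x - (D.pair i (x + D.ρ) % (l:ℤ)) • D.α i :=
    fun _ => rfl
  have hlam1 : D.lamOne l i lam = lam - j • D.α i := by rw [hOne, ← hM, ← hj]
  have E3 : D.lamOne l i lam - (l:ℤ) • β = D.lamOne l i μ := by
    rw [hlam1, hOne μ, hpμ, hmodμ, hμ]; module
  have E4 : D.lamOne l i lam - (l:ℤ) • (D.σ (D.s i) β) = D.lamOne l i μ' := by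
    rw [hlam1, hOne μ', hpμ', hmodμ', hμ']; module
  have E5 : D.dot (D.s i) lam - (l:ℤ) • β = D.dot (D.s i) μ' := by rw [hμ', dot_sub]
  have E6 : D.dot (D.s i) lam - (l:ℤ) • (D.σ (D.s i) β) = D.dot (D.s i) μ := by
    rw [hμ, dot_sub']
  have E7 : D.dot (D.s i) (D.lamOne l i lam) - (l:ℤ) • β =
      D.dot (D.s i) (D.lamOne l i μ') := by
    rw [← dot_sub D i (D.lamOne l i lam) β, E4]
  have E8 : D.dot (D.s i) (D.lamOne l i lam) - (l:ℤ) • (D.σ (D.s i) β) =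
      D.dot (D.s i) (D.lamOne l i μ) := by
    rw [← dot_sub' D i (D.lamOne l i lam) β, E3]
  have hcand1 := cand_mem D l hl i μ hndμ
  have hcand2 := cand_mem D l hl i μ' hndμ'
  rw [E5, E6, E7, E8, E3, E4]
  have e : (ket (D.dot (D.s i) μ') + tHalf • ket (D.dot (D.s i) (D.lamOne l i μ')) +
      ket (D.lamOne l i μ) + tHalf • ket μ) +
      (ket (D.dot (D.s i) μ) + tHalf • ket (D.dot (D.s i) (D.lamOne l i μ)) +
      ket (D.lamOne l i μ') + tHalf • ket μ') =
      (ket (D.dot (D.s i) μ) + tHalf • ket (D.dot (D.s i) (D.lamOne l i μ)) +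
      ket (D.lamOne l i μ) + tHalf • ket μ) +
      (ket (D.dot (D.s i) μ') + tHalf • ket (D.dot (D.s i) (D.lamOne l i μ')) +
      ket (D.lamOne l i μ') + tHalf • ket μ') := by module
  rw [e]
  exact Submodule.add_mem _ hcand1 hcand2

lemma singleC (hl : 0 < l) (i : Fin D.n) (lam β : Λ)
    (hc1 : (l:ℤ) < D.pair i (lam + D.ρ)) (hc2 : ¬ ((l:ℤ) ∣ D.pair i (lam + D.ρ)))
    (hd0 : D.pair i β = 0) :
    ket (D.dot (D.s i) lam - (l:ℤ) • β) +
      tHalf • ket (D.dot (D.s i) (D.lamOne l i lam) - (l:ℤ) • β) +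
      ket (D.lamOne l i lam - (l:ℤ) • β) + tHalf • ket (lam - (l:ℤ) • β) ∈ D.Idl l := by
  have hσ : D.σ (D.s i) β = β := by rw [D.reflect, hd0]; simp
  set M := D.pair i (lam + D.ρ) with hM
  set j := M % (l:ℤ) with hj
  have hl' : (0:ℤ) < l := by exact_mod_cast hl
  set μ := lam - (l:ℤ) • β with hμ
  have hpμ : D.pair i (μ + D.ρ) = M := by
    rw [hμ, pair_shift, ← hM, hd0, mul_zero, sub_zero]
  have hndμ : ¬ ((l:ℤ) ∣ D.pair i (μ + D.ρ)) := by rw [hpμ]; exact hc2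
  have hOne : ∀ x : Λ, D.lamOne l i x = x - (D.pair i (x + D.ρ) % (l:ℤ)) • D.α i :=
    fun _ => rfl
  have hlam1 : D.lamOne l i lam = lam - j • D.α i := by rw [hOne, ← hM, ← hj]
  have E3 : D.lamOne l i lam - (l:ℤ) • β = D.lamOne l i μ := by
    rw [hlam1, hOne μ, hpμ, ← hj, hμ]; module
  have E6 : D.dot (D.s i) lam - (l:ℤ) • β = D.dot (D.s i) μ := by
    rw [hμ]
    conv_lhs => rw [← hσ, ← dot_sub' D i lam β]
  have E8 : D.dot (D.s i) (D.lamOne l i lam) - (l:ℤ) • β =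
      D.dot (D.s i) (D.lamOne l i μ) := by
    conv_lhs => rw [← hσ, ← dot_sub' D i (D.lamOne l i lam) β]
    rw [E3]
  rw [E3, E6, E8]
  exact cand_mem D l hl i μ hndμ
end Aux4
section Aux5
variable {Λ W : Type} [AddCommGroup Λ] [Group W] [Fintype W] (D : RootData Λ W) (l : ℕ)

lemma opX_ket_n (ν γ : Λ) : D.opX l ν (ket γ) = ket (γ - l • D.σ D.w0 ν) := by
  simp [RootData.opX, ket, Finsupp.lmapDomain_apply, Finsupp.mapDomain_single]

lemma opX_ket (ν γ : Λ) : D.opX l ν (ket γ) = ket (γ - (l:ℤ) • D.σ D.w0 ν) := by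
  rw [opX_ket_n, natCast_zsmul]

lemma u_mul (i : Fin D.n) :
    (D.w0⁻¹ * D.s i * D.w0) * (D.w0⁻¹ * D.s i * D.w0) = 1 := by
  have h : (D.w0⁻¹ * D.s i * D.w0) * (D.w0⁻¹ * D.s i * D.w0) =
      D.w0⁻¹ * (D.s i * D.s i) * D.w0 := by group
  rw [h, D.s_sq]; group

lemma sig_u_u (i : Fin D.n) (ν : Λ) :
    D.σ (D.w0⁻¹ * D.s i * D.w0) (D.σ (D.w0⁻¹ * D.s i * D.w0) ν) = ν := by
  have h : D.σ ((D.w0⁻¹ * D.s i * D.w0) * (D.w0⁻¹ * D.s i * D.w0)) ν = ν := by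
    rw [u_mul, map_one]; rfl
  rw [map_mul] at h; exact h

lemma sigma_u (i : Fin D.n) (ν : Λ) :
    D.σ D.w0 (D.σ (D.w0⁻¹ * D.s i * D.w0) ν) = D.σ (D.s i) (D.σ D.w0 ν) := by
  have h : ∀ (a b : W) (x : Λ), D.σ (a * b) x = D.σ a (D.σ b x) := fun a b x => by
    rw [map_mul]; rfl
  rw [← h, ← h, show D.w0 * (D.w0⁻¹ * D.s i * D.w0) = D.s i * D.w0 by group]

lemma u_fix (i : Fin D.n) (ν : Λ) (h : D.σ (D.w0⁻¹ * D.s i * D.w0) ν = ν) :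
    D.pair i (D.σ D.w0 ν) = 0 := by
  have hb : D.σ (D.s i) (D.σ D.w0 ν) = D.σ D.w0 ν := by rw [← sigma_u, h]
  rw [D.reflect] at hb
  have h0 : D.pair i (D.σ D.w0 ν) • D.α i = 0 := sub_eq_self.mp hb
  have h2 := congrArg (D.pair i) h0
  rw [map_zsmul, D.pair_alpha_self, map_zero, smul_eq_mul] at h2
  omega

lemma act_mem (hl : 0 < l) (g : Λ →₀ K) (hg : ∀ (w : W) (ν : Λ), g (D.σ w ν) = g ν) :
    ∀ x ∈ D.Idl l, D.actKX l g x ∈ D.Idl l := by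
  intro x hx
  have hL : ∀ y : V Λ, D.actKX l g y = ∑ ν ∈ g.support, g ν • D.opX l ν y := fun y => rfl
  have hq : ∀ v : V Λ, Submodule.Quotient.mk (p := D.Idl l) v = 0 ↔ v ∈ D.Idl l :=
    fun v => Submodule.Quotient.mk_eq_zero _
  have key : ∀ (i : Fin D.n) (r : V Λ),
      (∀ ν : Λ, D.opX l ν r + D.opX l (D.σ (D.w0⁻¹ * D.s i * D.w0) ν) r ∈ D.Idl l) →
      (∀ ν : Λ, D.pair i (D.σ D.w0 ν) = 0 → D.opX l ν r ∈ D.Idl l) →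
      (∑ ν ∈ g.support, g ν • D.opX l ν r) ∈ D.Idl l := by
    intro i r hpair hfix
    rw [← hq]
    have hmk : Submodule.Quotient.mk (p := D.Idl l) (∑ ν ∈ g.support, g ν • D.opX l ν r)
        = ∑ ν ∈ g.support,
            g ν • (Submodule.Quotient.mk (p := D.Idl l) (D.opX l ν r)) := by
      rw [← Submodule.mkQ_apply, map_sum]
      simp [Submodule.mkQ_apply]
    rw [hmk]
    apply Finset.sum_involution (g := fun ν _ => D.σ (D.w0⁻¹ * D.s i * D.w0) ν)
    · intro ν hν
      rw [hg (D.w0⁻¹ * D.s i * D.w0) ν, ← smul_add, ← Submodule.Quotient.mk_add,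
        (hq _).mpr (hpair ν), smul_zero]
    · intro ν hν hne heq
      exact hne (by rw [(hq _).mpr (hfix ν (u_fix D i ν heq)), smul_zero])
    · intro ν hν
      rw [Finsupp.mem_support_iff] at hν ⊢
      rw [hg]; exact hν
    · intro ν hν
      exact sig_u_u D i ν
  rw [hL]
  unfold RootData.Idl at hx
  induction hx using Submodule.span_induction with
  | mem r hr =>
    simp only [Set.mem_union, Set.mem_setOf_eq] at hr
    rcases hr with (⟨i, lam, hcond, rfl⟩ | ⟨i, lam, h1, h2, rfl⟩) | ⟨i, lam, h1, h2, rfl⟩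
    · refine key i _ (fun ν => ?_) (fun ν h0 => ?_)
      · simp only [map_add, opX_ket, sigma_u]
        exact shiftA D l hl i lam (D.σ D.w0 ν) hcond
      · simp only [map_add, opX_ket]
        exact singleA D l i lam (D.σ D.w0 ν) hcond h0
    · refine key i _ (fun ν => ?_) (fun ν h0 => ?_)
      · simp only [map_add, map_smul, opX_ket, sigma_u]
        exact shiftB D l hl i lam (D.σ D.w0 ν) h1 h2
      · simp only [map_add, map_smul, opX_ket]
        exact singleB D l i lam (D.σ D.w0 ν) h1 h2 h0
    · refine key i _ (fun ν => ?_) (fun ν h0 => ?_)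
      · simp only [map_add, map_smul, opX_ket, sigma_u]
        exact shiftC D l hl i lam (D.σ D.w0 ν) h1 h2
      · simp only [map_add, map_smul, opX_ket]
        exact singleC D l hl i lam (D.σ D.w0 ν) h1 h2 h0
  | zero =>
    simp only [map_zero, smul_zero, Finset.sum_const_zero]
    exact zero_mem _
  | add x y hxs hys ihx ihy =>
    simp only [map_add, smul_add, Finset.sum_add_distrib]
    exact add_mem ihx ihy
  | smul a x hxs ih =>
    simp only [map_smul]
    have e : (∑ ν ∈ g.support, g ν • a • D.opX l ν x) =
        a • ∑ ν ∈ g.support, g ν • D.opX l ν x := by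
      rw [Finset.smul_sum]
      exact Finset.sum_congr rfl fun ν _ => smul_comm _ _ _
    rw [e]
    exact Submodule.smul_mem _ a ih

lemma act_single (ν : Λ) (c : K) (v : V Λ) :
    D.actKX l (Finsupp.single ν c) v = c • D.opX l ν v := by
  unfold RootData.actKX
  exact Finsupp.sum_single_index (zero_smul K _)

lemma act_add (g₁ g₂ : Λ →₀ K) (v : V Λ) :
    D.actKX l (g₁ + g₂) v = D.actKX l g₁ v + D.actKX l g₂ v := by
  unfold RootData.actKX
  exact Finsupp.sum_add_index' (fun a => zero_smul K _) (fun a b₁ b₂ => add_smul b₁ b₂ _)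

lemma act_sum_single (mu : Λ) (v : V Λ) :
    D.actKX l (∑ w : W, Finsupp.single (D.σ w mu) (1:K)) v
      = ∑ w : W, D.opX l (D.σ w mu) v := by
  classical
  have hs : ∀ s : Finset W, D.actKX l (∑ w ∈ s, Finsupp.single (D.σ w mu) (1:K)) v
      = ∑ w ∈ s, D.opX l (D.σ w mu) v := by
    intro s
    induction s using Finset.induction_on with
    | empty =>
      simp only [Finset.sum_empty]
      unfold RootData.actKX
      exact Finsupp.sum_zero_index
    | insert _ _ hnotmem ih =>
      rw [Finset.sum_insert hnotmem, act_add, act_single, one_smul,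
        Finset.sum_insert hnotmem, ih]
  exact hs Finset.univ

lemma g0_inv (mu : Λ) (w : W) (ν : Λ) :
    (∑ w' : W, Finsupp.single (D.σ w' mu) (1:K)) (D.σ w ν)
      = (∑ w' : W, Finsupp.single (D.σ w' mu) (1:K)) ν := by
  classical
  rw [Finsupp.finset_sum_apply, Finsupp.finset_sum_apply]
  refine (Fintype.sum_bijective (fun w'' : W => w * w'') (Group.mulLeft_bijective w)
      (fun w'' => (Finsupp.single (D.σ w'' mu) (1:K)) ν)
      (fun w' => (Finsupp.single (D.σ w' mu) (1:K)) (D.σ w ν)) (fun w'' => ?_)).symm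
  show (Finsupp.single (D.σ w'' mu) (1:K)) ν
      = (Finsupp.single (D.σ (w * w'') mu) (1:K)) (D.σ w ν)
  rw [Finsupp.single_apply, Finsupp.single_apply]
  have hiff : (D.σ w'' mu = ν) ↔ (D.σ (w * w'') mu = D.σ w ν) := by
    rw [map_mul]; change _ ↔ D.σ w (D.σ w'' mu) = D.σ w ν
    exact ⟨fun h' => by rw [h'], fun h' => (EquivLike.injective (D.σ w)) h'⟩
  simp only [hiff]

end Aux5

/-- Proposition 1.1: for every `μ ∈ a_ℤ^*` the operator
`v ↦ ∑_{w ∈ W₀} X^{wμ} · v` (level `-(l+h)` action) maps `I` into `I`; more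
generally every `W₀`-invariant element of `K[X]` preserves `I`; consequently the
level `-(l+h)` action induces a well-defined `K`-linear action of `K[X]^{W₀}` on
`F_l = V/I`, satisfying `(∑_{w ∈ W₀} X^{wμ}) · |γ⟩ = ∑_{w ∈ W₀} |γ - l w₀(wμ)⟩`. -/
theorem statement0 {Λ W : Type} [AddCommGroup Λ] [Group W] [Fintype W]
    (D : RootData Λ W) (l : ℕ) (hl : 0 < l) (mu : Λ) :
    Submodule.map (∑ w : W, D.opX l (D.σ w mu)) (D.Idl l) ≤ D.Idl l ∧
    (∀ g : Λ →₀ K, (∀ (w : W) (nu : Λ), g (D.σ w nu) = g nu) →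
      ∀ x ∈ D.Idl l, D.actKX l g x ∈ D.Idl l) ∧
    ∃ Φ : (V Λ ⧸ D.Idl l) →ₗ[K] (V Λ ⧸ D.Idl l),
      ∀ gam : Λ, Φ (Submodule.Quotient.mk (ket gam)) =
        ∑ w : W, (Submodule.Quotient.mk (ket (gam - l • D.σ D.w0 (D.σ w mu)))
          : V Λ ⧸ D.Idl l) := by
  have hpart2 : ∀ g : Λ →₀ K, (∀ (w : W) (nu : Λ), g (D.σ w nu) = g nu) →
      ∀ x ∈ D.Idl l, D.actKX l g x ∈ D.Idl l := fun g hg => act_mem D l hl g hg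
  have hmap : Submodule.map (∑ w : W, D.opX l (D.σ w mu)) (D.Idl l) ≤ D.Idl l := by
    rintro x ⟨y, hy, rfl⟩
    have e : (∑ w : W, D.opX l (D.σ w mu)) y
        = D.actKX l (∑ w' : W, Finsupp.single (D.σ w' mu) (1:K)) y := by
      rw [LinearMap.sum_apply, act_sum_single]
    rw [e]
    exact hpart2 _ (g0_inv D mu) y hy
  refine ⟨hmap, hpart2, ?_⟩
  refine ⟨Submodule.mapQ _ _ (∑ w : W, D.opX l (D.σ w mu))
    (Submodule.map_le_iff_le_comap.mp hmap), fun gam => ?_⟩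
  rw [Submodule.mapQ_apply, LinearMap.sum_apply, ← Submodule.mkQ_apply, map_sum]
  refine Finset.sum_congr rfl fun w _ => ?_
  rw [Submodule.mkQ_apply, opX_ket_n]
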